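/- Let H be a history, S a partition state of H, ℓ a linearization of S, and o ∈ S the operation at which ℓ attains its maximum over S. Then S \ {o} is a partition state of H. -/
import Mathlib


structure Operation (M V : Type) where
  id : ℕ
  method : M
  value : V
  tinv : ℚ
  tres : ℚ
deriving DecidableEq

def WellFormed {M V : Type} (H : Finset (Operation M V)) : Prop :=
  ∀ o ∈ H, o.tinv < o.tres

def IsPartitionState {M V : Type} (H S : Finset (Operation M V)) : Prop :=
  S ⊆ H ∧ ∃ t : ℚ, ∀ o ∈ H, (o.tres < t → o ∈ S) ∧ (t < o.tinv → o ∉ S)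

def IsLinearization {M V : Type} (X : Finset (Operation M V)) (ℓ : Operation M V → ℚ) : Prop :=
  Set.InjOn ℓ ↑X ∧ ∀ o ∈ X, o.tinv < ℓ o ∧ ℓ o < o.tres

theorem stmt3 {M V : Type} [DecidableEq M] [DecidableEq V]
    (H : Finset (Operation M V)) (hwf : WellFormed H)
    (S : Finset (Operation M V)) (hS : IsPartitionState H S)
    (ℓ : Operation M V → ℚ) (hℓ : IsLinearization S ℓ)
    (o : Operation M V) (ho : o ∈ S) (hmax : ∀ o' ∈ S, ℓ o' ≤ ℓ o) :
    IsPartitionState H (S.erase o) := by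
  obtain ⟨hsub, t, ht⟩ := hS
  obtain ⟨hinj, hlin⟩ := hℓ
  refine ⟨(Finset.erase_subset _ _).trans hsub, min t (ℓ o), fun o' ho' => ⟨?_, ?_⟩⟩
  · intro hres
    rw [lt_min_iff] at hres
    refine Finset.mem_erase.mpr ⟨?_, (ht o' ho').1 hres.1⟩
    intro h
    exact absurd (hlin o ho).2 (not_lt.mpr (h ▸ hres.2).le)
  · intro hinv hmem
    rw [min_lt_iff] at hinv
    have hS' := Finset.mem_of_mem_erase hmem
    rcases hinv with h | h
    · exact (ht o' ho').2 h hS'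
    · have h1 := (hlin o' hS').1
      have h2 := hmax o' hS'
      have : ℓ o < ℓ o := lt_of_lt_of_le (h.trans h1) h2
      exact absurd this (lt_irrefl _)
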